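/- Suppose the grading (g_j)_{j∈ℤ} of M_N(ℂ) is good for the nilpotent matrix e ∈ g₂, and let V = g_{−1} = {x ∈ M_N(ℂ) : hx − xh = −x}. Then: (a) the alternating bilinear form B₀(x, y) = tr(e(xy − yx)) on V is nondegenerate; (b) the symmetric bilinear form B₁(x, y) = tr(e(xy + yx)) on V is nondegenerate. (These are the even and odd components of the even nondegenerate skew-supersymmetric form ⟨x, y⟩ = χ([x, y]) on the degree −1 component of q(N).) -/

import Mathlib

/-- The `ad h`-eigenspace grading of `M_N(ℂ)`:
`g_j = {x ∈ M_N(ℂ) : hx − xh = j·x}`. -/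
noncomputable def adGrading {N : ℕ} (h : Matrix (Fin N) (Fin N) ℂ) (j : ℤ) :
    Submodule ℂ (Matrix (Fin N) (Fin N) ℂ) where
  carrier := {x | h * x - x * h = (j : ℂ) • x}
  zero_mem' := by simp
  add_mem' := by
    intro a b ha hb
    simp only [Set.mem_setOf_eq] at ha hb ⊢
    rw [smul_add, ← ha, ← hb]
    noncomm_ring
  smul_mem' := by
    intro c a ha
    simp only [Set.mem_setOf_eq] at ha ⊢
    rw [mul_smul_comm, smul_mul_assoc, ← smul_sub, ha]
    exact smul_comm _ _ _

namespace Stmt13Aux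

variable {N : ℕ} {h : Matrix (Fin N) (Fin N) ℂ}

lemma mem_adGrading {j : ℤ} {x : Matrix (Fin N) (Fin N) ℂ} :
    x ∈ adGrading h j ↔ h * x - x * h = (j : ℂ) • x := Iff.rfl

lemma mul_mem_adGrading {i j k : ℤ} {x y : Matrix (Fin N) (Fin N) ℂ}
    (hx : x ∈ adGrading h i) (hy : y ∈ adGrading h j) (hk : i + j = k) :
    x * y ∈ adGrading h k := by
  rw [mem_adGrading] at hx hy ⊢
  have key : h * (x * y) - (x * y) * h = (h * x - x * h) * y + x * (h * y - y * h) := by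
    noncomm_ring
  rw [key, hx, hy, smul_mul_assoc, mul_smul_comm, ← add_smul, ← hk]
  push_cast
  ring_nf

lemma trace_eq_zero_of_mem {j : ℤ} (hj : j ≠ 0) {x : Matrix (Fin N) (Fin N) ℂ}
    (hx : x ∈ adGrading h j) : x.trace = 0 := by
  rw [mem_adGrading] at hx
  have h1 := congrArg Matrix.trace hx
  rw [Matrix.trace_sub, Matrix.trace_mul_comm, sub_self, Matrix.trace_smul] at h1
  have hj' : (j : ℂ) ≠ 0 := Int.cast_ne_zero.mpr hj
  have h2 : (j : ℂ) * x.trace = 0 := by simpa [smul_eq_mul] using h1.symm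
  exact (mul_eq_zero.mp h2).resolve_left hj'

/-- If `A * x = x * B` then `exp A * x = x * exp B`. -/
lemma exp_intertwine (A B x : Matrix (Fin N) (Fin N) ℂ) (hAB : A * x = x * B) :
    NormedSpace.exp A * x = x * NormedSpace.exp B := by
  letI : NormedRing (Matrix (Fin N) (Fin N) ℂ) := Matrix.linftyOpNormedRing
  letI : NormedAlgebra ℂ (Matrix (Fin N) (Fin N) ℂ) := Matrix.linftyOpNormedAlgebra
  have hpow : ∀ n : ℕ, A ^ n * x = x * B ^ n := by
    intro n
    induction n with
    | zero => simp
    | succ n ih =>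
      rw [pow_succ, pow_succ, mul_assoc, hAB, ← mul_assoc, ih, mul_assoc]
  calc NormedSpace.exp A * x
      = (∑' n : ℕ, ((n.factorial : ℂ)⁻¹) • A ^ n) * x := by
        rw [NormedSpace.exp_eq_tsum (𝕂 := ℂ)]
    _ = ∑' n : ℕ, (((n.factorial : ℂ)⁻¹) • A ^ n) * x :=
        ((NormedSpace.expSeries_summable' (𝕂 := ℂ) A).tsum_mul_right x).symm
    _ = ∑' n : ℕ, x * (((n.factorial : ℂ)⁻¹) • B ^ n) := by
        congr 1; funext n
        rw [smul_mul_assoc, hpow, mul_smul_comm]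
    _ = x * ∑' n : ℕ, ((n.factorial : ℂ)⁻¹) • B ^ n :=
        (NormedSpace.expSeries_summable' (𝕂 := ℂ) B).tsum_mul_left x
    _ = x * NormedSpace.exp B := by rw [NormedSpace.exp_eq_tsum (𝕂 := ℂ)]

lemma smul_one_exp (c : ℂ) :
    NormedSpace.exp (c • (1 : Matrix (Fin N) (Fin N) ℂ)) = Complex.exp c • 1 := by
  rw [Matrix.smul_one_eq_diagonal, Matrix.exp_diagonal, Pi.exp_def, ← Complex.exp_eq_exp_ℂ,
    Matrix.smul_one_eq_diagonal]

lemma trace_mul_std (z : Matrix (Fin N) (Fin N) ℂ) (i j : Fin N) :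
    (z * Matrix.single j i 1).trace = z i j := by
  simp only [Matrix.trace, Matrix.diag_apply, Matrix.mul_apply, Matrix.single,
    Matrix.of_apply, mul_ite, mul_one, mul_zero, ite_and, Finset.sum_ite_eq,
    Finset.sum_ite_eq', Finset.mem_univ, if_true]

end Stmt13Aux

open Stmt13Aux in
/-- Suppose the grading `(g_j)` of `M_N(ℂ)` is good for the nilpotent
matrix `e ∈ g₂`, and let `V = g_{−1}`.  Then (a) the alternating bilinear form
`B₀(x,y) = tr(e(xy − yx))` on `V` is nondegenerate, and (b) the symmetric bilinear form
`B₁(x,y) = tr(e(xy + yx))` on `V` is nondegenerate. -/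
theorem stmt13 {N : ℕ} (h e : Matrix (Fin N) (Fin N) ℂ)
    (hinternal : DirectSum.IsInternal (adGrading h))
    (hnil : IsNilpotent e)
    (he : e ∈ adGrading h 2)
    (hgood : ∀ x : Matrix (Fin N) (Fin N) ℂ, x * e = e * x →
      x ∈ ⨆ j ≥ (0 : ℤ), adGrading h j) :
    (∀ x ∈ adGrading h (-1),
      (∀ y ∈ adGrading h (-1), (e * (x * y - y * x)).trace = 0) → x = 0) ∧
    (∀ x ∈ adGrading h (-1),
      (∀ y ∈ adGrading h (-1), (e * (x * y + y * x)).trace = 0) → x = 0) := by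
  -- membership in `g_{-1}` and in `⨆_{j ≥ 0} g_j` forces `x = 0`
  have hbot : ∀ x : Matrix (Fin N) (Fin N) ℂ, x ∈ adGrading h (-1) →
      x ∈ (⨆ j ≥ (0 : ℤ), adGrading h j) → x = 0 := by
    intro x hx hx2
    have hind := hinternal.submodule_iSupIndep
    have hle : (⨆ j ≥ (0 : ℤ), adGrading h j) ≤ ⨆ j ≠ (-1 : ℤ), adGrading h j := by
      refine iSup₂_le fun j hj => ?_
      exact le_iSup₂_of_le j (by omega) le_rfl
    have hdisj := hind (-1 : ℤ)
    have hxb : x ∈ (⊥ : Submodule ℂ (Matrix (Fin N) (Fin N) ℂ)) :=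
      hdisj.le_bot ⟨hx, hle hx2⟩
    simpa using hxb
  -- a homogeneous element `z ∈ g₁` whose products with `g_{-1}` are traceless is zero
  have hkey : ∀ z : Matrix (Fin N) (Fin N) ℂ, z ∈ adGrading h 1 →
      (∀ y ∈ adGrading h (-1), (z * y).trace = 0) → z = 0 := by
    intro z hz htr
    have hall : ∀ y : Matrix (Fin N) (Fin N) ℂ, (z * y).trace = 0 := by
      intro y
      have hy : y ∈ ⨆ j, adGrading h j := by
        rw [hinternal.submodule_iSup_eq_top]; trivial
      refine Submodule.iSup_induction (motive := fun w => (z * w).trace = 0) _ hy ?_ ?_ ?_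
      · intro j w hw
        by_cases hj : j = -1
        · subst hj; exact htr w hw
        · exact trace_eq_zero_of_mem (by omega) (mul_mem_adGrading hz hw rfl)
      · simp
      · intro a b ha hb
        rw [mul_add, Matrix.trace_add, ha, hb, add_zero]
    ext i j
    have hij := hall (Matrix.single j i 1)
    rw [trace_mul_std] at hij
    simpa using hij
  constructor
  · -- part (a): `B₀` nondegenerate
    intro x hx htr
    have hz : e * x - x * e ∈ adGrading h 1 :=
      Submodule.sub_mem _ (mul_mem_adGrading he hx (by norm_num))
        (mul_mem_adGrading hx he (by norm_num))
    have hz0 : e * x - x * e = 0 := by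
      refine hkey _ hz fun y hy => ?_
      calc ((e * x - x * e) * y).trace
          = (e * (x * y)).trace - (x * (e * y)).trace := by
            rw [sub_mul, Matrix.trace_sub, mul_assoc, mul_assoc]
        _ = (e * (x * y)).trace - (e * (y * x)).trace := by
            rw [Matrix.trace_mul_comm x (e * y), mul_assoc]
        _ = (e * (x * y - y * x)).trace := by
            rw [mul_sub, Matrix.trace_sub]
        _ = 0 := htr y hy
    exact hbot x hx (hgood x (sub_eq_zero.mp hz0).symm)
  · -- part (b): `B₁` nondegenerate
    intro x hx htr
    have hz : e * x + x * e ∈ adGrading h 1 :=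
      Submodule.add_mem _ (mul_mem_adGrading he hx (by norm_num))
        (mul_mem_adGrading hx he (by norm_num))
    have hz0 : e * x + x * e = 0 := by
      refine hkey _ hz fun y hy => ?_
      calc ((e * x + x * e) * y).trace
          = (e * (x * y)).trace + (x * (e * y)).trace := by
            rw [add_mul, Matrix.trace_add, mul_assoc, mul_assoc]
        _ = (e * (x * y)).trace + (e * (y * x)).trace := by
            rw [Matrix.trace_mul_comm x (e * y), mul_assoc]
        _ = (e * (x * y + y * x)).trace := by
            rw [mul_add, Matrix.trace_add]
        _ = 0 := htr y hy
    -- `x` anticommutes with `e`; twist by `s = exp((πi/2)·h)` to get a commuting element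
    have hanti : x * e = -(e * x) := eq_neg_of_add_eq_zero_right hz0
    set a : ℂ := (Real.pi : ℂ) * Complex.I / 2 with ha_def
    set A : Matrix (Fin N) (Fin N) ℂ := a • h with hA_def
    set s : Matrix (Fin N) (Fin N) ℂ := NormedSpace.exp A with hs_def
    have h2e : h * e = e * h + (2 : ℂ) • e := by
      have h' := mem_adGrading.mp he
      have hc : ((2 : ℤ) : ℂ) = (2 : ℂ) := by norm_num
      rw [hc, sub_eq_iff_eq_add] at h'
      rw [h']
      exact add_comm _ _
    have hAe : A * e = e * (A + (2 * a) • 1) := by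
      rw [hA_def, smul_mul_assoc, h2e]
      simp only [smul_add, mul_add, mul_smul_comm, mul_one, smul_smul]
      rw [mul_comm a 2]
    have hse : s * e = -(e * s) := by
      have h1 := exp_intertwine A (A + (2 * a) • 1) e hAe
      have h2 : NormedSpace.exp (A + (2 * a) • (1 : Matrix (Fin N) (Fin N) ℂ)) = -s := by
        letI : NormedRing (Matrix (Fin N) (Fin N) ℂ) := Matrix.linftyOpNormedRing
        letI : NormedAlgebra ℂ (Matrix (Fin N) (Fin N) ℂ) := Matrix.linftyOpNormedAlgebra
        rw [Matrix.exp_add_of_commute _ _ ((Commute.one_right A).smul_right _),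
          smul_one_exp]
        have h2a : 2 * a = (Real.pi : ℂ) * Complex.I := by rw [ha_def]; ring
        rw [h2a, Complex.exp_pi_mul_I, hs_def]
        simp
      rw [h1, h2, mul_neg]
    have hsh : s * h = h * s := by
      have h' := exp_intertwine A A h (by rw [hA_def, smul_mul_assoc, mul_smul_comm])
      rw [hs_def]
      exact h'
    have hs_mem : s ∈ adGrading h 0 := by
      rw [mem_adGrading, hsh, sub_self]
      simp
    have hy_mem : s * x ∈ adGrading h (-1) := mul_mem_adGrading hs_mem hx (by norm_num)
    have hy_comm : (s * x) * e = e * (s * x) := by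
      calc (s * x) * e = s * (x * e) := by rw [mul_assoc]
        _ = -(s * (e * x)) := by rw [hanti, mul_neg]
        _ = -((s * e) * x) := by rw [mul_assoc]
        _ = -(-(e * s) * x) := by rw [hse]
        _ = e * (s * x) := by rw [neg_mul, neg_neg, mul_assoc]
    have hy0 : s * x = 0 := hbot _ hy_mem (hgood _ hy_comm)
    -- `s` is invertible, so `x = 0`
    have hinv : NormedSpace.exp (-A) * s = 1 := by
      letI : NormedRing (Matrix (Fin N) (Fin N) ℂ) := Matrix.linftyOpNormedRing
      letI : NormedAlgebra ℂ (Matrix (Fin N) (Fin N) ℂ) := Matrix.linftyOpNormedAlgebra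
      rw [hs_def, ← Matrix.exp_add_of_commute _ _ ((Commute.refl A).neg_left),
        neg_add_cancel, NormedSpace.exp_zero]
    calc x = (NormedSpace.exp (-A) * s) * x := by rw [hinv, one_mul]
      _ = NormedSpace.exp (-A) * (s * x) := by rw [mul_assoc]
      _ = 0 := by rw [hy0, mul_zero]
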